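/- Let $p$ be a polynomial of degree $d$ with $\mathscr{W}(p)(x)=\sum_{i=0}^s h_i x^i$ where $s\le d$. Then $x^s\,\mathscr{W}(p)(1/x)=\mathscr{W}(p)(x)$ (i.e., $h_i=h_{s-i}$ for all $i$) if and only if $(-1)^d p(-(x+d+1-s))=p(x)$ as polynomials. -/

import Mathlib

open Polynomial

/-- The polynomial `binom (x + d - i) d = (x+d-i)(x+d-i-1)⋯(x+1-i)/d!`. -/
noncomputable def binomPoly (d i : ℕ) : Polynomial ℝ :=
  Polynomial.C ((d.factorial : ℝ)⁻¹) *
    ∏ j ∈ Finset.range d, (Polynomial.X + Polynomial.C ((d : ℝ) - i - j))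

lemma binomPoly_comp (d s i : ℕ) (hi : i ≤ s) :
    C ((-1:ℝ)^d) * (binomPoly d i).comp (-(X + C ((d:ℝ) + 1 - s))) = binomPoly d (s - i) := by
  unfold binomPoly
  rw [mul_comp, C_comp]
  have hprod : (∏ j ∈ Finset.range d, (X + C ((d : ℝ) - i - j))).comp
      (-(X + C ((d:ℝ) + 1 - s))) =
      ∏ j ∈ Finset.range d, (-1 : ℝ[X]) * (X + C ((i:ℝ) + j + 1 - s)) := by
    rw [Polynomial.prod_comp]
    refine Finset.prod_congr rfl fun j _ => ?_
    rw [add_comp, X_comp, C_comp]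
    simp only [map_add, map_sub, map_one, map_natCast]
    ring
  rw [hprod, Finset.prod_mul_distrib, Finset.prod_const, Finset.card_range]
  have hkey : ∏ j ∈ Finset.range d, (X + C ((i:ℝ) + j + 1 - s)) =
      ∏ j ∈ Finset.range d, (X + C ((d : ℝ) - (s - i : ℕ) - j)) := by
    rw [← Finset.prod_range_reflect]
    refine Finset.prod_congr rfl fun j hj => ?_
    simp only [Finset.mem_range] at hj
    congr 1
    have h1 : ((d - 1 - j : ℕ) : ℝ) = (d : ℝ) - 1 - j := by
      have : ((d - 1 - j : ℕ) : ℝ) = ((d - (1 + j) : ℕ) : ℝ) := by rw [Nat.sub_sub]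
      rw [this, Nat.cast_sub (by omega)]
      push_cast; ring
    have h2 : ((s - i : ℕ) : ℝ) = (s : ℝ) - i := by rw [Nat.cast_sub hi]
    rw [h1, h2]; ring
  rw [hkey]
  have : C ((-1:ℝ)^d) * (C ((d.factorial : ℝ)⁻¹) * ((-1:ℝ[X])^d *
      ∏ j ∈ Finset.range d, (X + C ((d : ℝ) - (s - i : ℕ) - j)))) =
      (C (-1:ℝ) * (-1:ℝ[X]))^d * (C ((d.factorial : ℝ)⁻¹) *
      ∏ j ∈ Finset.range d, (X + C ((d : ℝ) - (s - i : ℕ) - j))) := by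
    rw [map_pow, mul_pow]; ring
  rw [this]
  simp

lemma binomPoly_eval_self (d m : ℕ) : (binomPoly d m).eval (m:ℝ) = 1 := by
  unfold binomPoly
  rw [eval_mul, eval_C, eval_prod]
  have : ∏ j ∈ Finset.range d, ((X : ℝ[X]) + C ((d : ℝ) - m - j)).eval (m:ℝ)
      = (d.factorial : ℝ) := by
    have h1 : ∀ j ∈ Finset.range d, ((X : ℝ[X]) + C ((d : ℝ) - m - j)).eval (m:ℝ)
        = ((d - j : ℕ) : ℝ) := by
      intro j hj
      simp only [Finset.mem_range] at hj
      rw [eval_add, eval_X, eval_C, Nat.cast_sub hj.le]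
      ring
    rw [Finset.prod_congr rfl h1, ← Nat.cast_prod]
    congr 1
    rw [← Finset.prod_range_reflect]
    have : ∀ j ∈ Finset.range d, d - (d - 1 - j) = j + 1 := by
      intro j hj; simp only [Finset.mem_range] at hj; omega
    rw [Finset.prod_congr rfl this]
    exact Finset.prod_range_add_one_eq_factorial d
  rw [this]
  field_simp


lemma binomPoly_eval_zero (d i m : ℕ) (hi : i ≤ d) (hmi : m < i) :
    (binomPoly d i).eval (m:ℝ) = 0 := by
  unfold binomPoly
  rw [eval_mul, eval_prod]
  have : ∃ j ∈ Finset.range d, ((X : ℝ[X]) + C ((d : ℝ) - i - j)).eval (m:ℝ) = 0 := by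
    refine ⟨m + d - i, by simp only [Finset.mem_range]; omega, ?_⟩
    rw [eval_add, eval_X, eval_C, Nat.cast_sub (by omega)]
    push_cast; ring
  obtain ⟨j, hj, hz⟩ := this
  rw [Finset.prod_eq_zero hj hz, mul_zero]


lemma binomPoly_indep (d : ℕ) (c : ℕ → ℝ)
    (h : ∑ i ∈ Finset.range (d+1), C (c i) * binomPoly d i = 0) :
    ∀ m, m ≤ d → c m = 0 := by
  intro m
  induction m using Nat.strong_induction_on with
  | _ m ih =>
    intro hm
    have he := congrArg (Polynomial.eval (m:ℝ)) h
    rw [eval_finset_sum, eval_zero] at he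
    simp only [eval_mul, eval_C] at he
    rw [Finset.sum_eq_single m (fun i hi hne => ?_) (fun hmem => ?_)] at he
    · rw [binomPoly_eval_self, mul_one] at he; exact he
    · simp only [Finset.mem_range] at hi
      rcases lt_or_gt_of_ne hne with hlt | hgt
      · rw [ih i hlt (by omega), zero_mul]
      · rw [binomPoly_eval_zero d i m (by omega) hgt, mul_zero]
    · exact absurd (Finset.mem_range.2 (by omega)) hmem

/-- Let `p` have degree `d` and `h = 𝒲(p)`, i.e. `p = ∑_{i=0}^d h_i (x+d-i choose d)`,
with `deg h ≤ s ≤ d`.  Then `h` is symmetric, `x^s h(1/x) = h(x)` (i.e.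
`h_i = h_{s-i}` for all `i ≤ s`), if and only if
`(-1)^d p(-(x+d+1-s)) = p(x)` as polynomials. -/
theorem W_symmetric_iff_reciprocity (p h : Polynomial ℝ) (d s : ℕ)
    (hd : p.natDegree = d) (hsd : s ≤ d) (hs : h.natDegree ≤ s)
    (hW : p = ∑ i ∈ Finset.range (d + 1), Polynomial.C (h.coeff i) * binomPoly d i) :
    (∀ i ≤ s, h.coeff i = h.coeff (s - i)) ↔
      Polynomial.C ((-1 : ℝ) ^ d) *
        p.comp (-(Polynomial.X + Polynomial.C ((d : ℝ) + 1 - s))) = p := by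
  have hp : p = ∑ i ∈ Finset.range (s + 1), C (h.coeff i) * binomPoly d i := by
    rw [hW]
    symm
    refine Finset.sum_subset (Finset.range_subset_range.2 (by omega)) fun i hi hni => ?_
    simp only [Finset.mem_range] at hi hni
    rw [coeff_eq_zero_of_natDegree_lt (lt_of_le_of_lt hs (by omega)), map_zero, zero_mul]
  have hcomp : C ((-1:ℝ)^d) * p.comp (-(X + C ((d:ℝ) + 1 - s))) =
      ∑ i ∈ Finset.range (s + 1), C (h.coeff (s - i)) * binomPoly d i := by
    conv_lhs => rw [hp]
    rw [show ((∑ i ∈ Finset.range (s+1), C (h.coeff i) * binomPoly d i).comp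
        (-(X + C ((d:ℝ) + 1 - s)))) =
        ∑ i ∈ Finset.range (s+1), (C (h.coeff i) * binomPoly d i).comp
        (-(X + C ((d:ℝ) + 1 - s))) from eval₂_finset_sum _ _ _ _]
    rw [Finset.mul_sum]
    have : ∀ i ∈ Finset.range (s+1),
        C ((-1:ℝ)^d) * (C (h.coeff i) * binomPoly d i).comp (-(X + C ((d:ℝ) + 1 - s)))
        = C (h.coeff i) * binomPoly d (s - i) := by
      intro i hi
      simp only [Finset.mem_range] at hi
      rw [mul_comp, C_comp, ← binomPoly_comp d s i (by omega)]
      ring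
    rw [Finset.sum_congr rfl this, ← Finset.sum_range_reflect]
    refine Finset.sum_congr rfl fun j hj => ?_
    simp only [Finset.mem_range] at hj
    have h1 : s + 1 - 1 - j = s - j := by omega
    have h2 : s - (s - j) = j := by omega
    rw [h1, h2]
  rw [hcomp]
  constructor
  · intro hsym
    rw [hp]
    refine Finset.sum_congr rfl fun i hi => ?_
    simp only [Finset.mem_range] at hi
    rw [← hsym i (by omega)]
  · intro heq
    intro i hi
    rw [hp] at heq
    have hzero : ∑ i ∈ Finset.range (d + 1),
        C (if i ≤ s then h.coeff (s - i) - h.coeff i else 0) * binomPoly d i = 0 := by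
      have e1 : ∑ i ∈ Finset.range (d + 1),
          C (if i ≤ s then h.coeff (s - i) - h.coeff i else 0) * binomPoly d i
          = ∑ i ∈ Finset.range (s + 1),
          C (if i ≤ s then h.coeff (s - i) - h.coeff i else 0) * binomPoly d i :=
        (Finset.sum_subset (Finset.range_subset_range.2 (by omega)) fun j hj hnj => by
          simp only [Finset.mem_range] at hj hnj
          rw [if_neg (by omega), map_zero, zero_mul]).symm
      have e2 : ∑ i ∈ Finset.range (s + 1),
          C (if i ≤ s then h.coeff (s - i) - h.coeff i else 0) * binomPoly d i
          = ∑ i ∈ Finset.range (s + 1),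
          (C (h.coeff (s - i)) * binomPoly d i - C (h.coeff i) * binomPoly d i) := by
        refine Finset.sum_congr rfl fun j hj => ?_
        simp only [Finset.mem_range] at hj
        rw [if_pos (by omega), map_sub]
        ring
      rw [e1, e2, Finset.sum_sub_distrib, heq, sub_self]
    have := binomPoly_indep d _ hzero i (by omega)
    rw [if_pos hi] at this
    linarith
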